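/- Let σ be a Kubo-Ando operator mean whose representing function f_σ is geometrically convex (f_σ(√(xy)) ≤ √(f_σ(x) f_σ(y)) for all x, y > 0). Then for positive semidefinite N×N matrices A, B, det^{1/N}(A σ B) ≥ (det^{1/N} A) σ (det^{1/N} B), where for nonnegative scalars a σ b = a f_σ(b/a) (extended by continuity). The reverse inequality holds when f_σ is geometrically concave. -/

import Mathlib

open scoped ComplexOrder

/-- The positive square root `A^{1/2}` via the continuous functional calculus. -/
noncomputable def rsqrt {N : ℕ} (A : Matrix (Fin N) (Fin N) ℂ) : Matrix (Fin N) (Fin N) ℂ :=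
  cfc Real.sqrt A

/-- The inverse square root `A^{-1/2}` via the continuous functional calculus. -/
noncomputable def risqrt {N : ℕ} (A : Matrix (Fin N) (Fin N) ℂ) : Matrix (Fin N) (Fin N) ℂ :=
  cfc (fun x : ℝ => (Real.sqrt x)⁻¹) A


section AuxLemmas
open Matrix Finset

-- midpoint Jensen for powers of 2
lemma pow2_jensen (g : ℝ → ℝ) (hm : ∀ s t : ℝ, g ((s + t) / 2) ≤ (g s + g t) / 2) :
    ∀ (k : ℕ) (t : ℕ → ℝ),
      g ((∑ i ∈ range (2 ^ k), t i) / 2 ^ k) ≤ (∑ i ∈ range (2 ^ k), g (t i)) / 2 ^ k := by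
  intro k
  induction k with
  | zero => intro t; simp
  | succ k ih =>
    intro t
    have h2 : (0:ℝ) < 2 ^ k := by positivity
    have hsplit : ∑ i ∈ range (2 ^ (k+1)), t i
        = ∑ i ∈ range (2 ^ k), t i + ∑ i ∈ range (2 ^ k), t (2 ^ k + i) := by
      rw [pow_succ, mul_two, Finset.sum_range_add]
    have hsplit' : ∑ i ∈ range (2 ^ (k+1)), g (t i)
        = ∑ i ∈ range (2 ^ k), g (t i) + ∑ i ∈ range (2 ^ k), g (t (2 ^ k + i)) := by
      rw [pow_succ, mul_two, Finset.sum_range_add]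
    rw [hsplit, hsplit']
    have e1 : (∑ i ∈ range (2 ^ k), t i + ∑ i ∈ range (2 ^ k), t (2 ^ k + i)) / 2 ^ (k+1)
        = ((∑ i ∈ range (2 ^ k), t i) / 2 ^ k + (∑ i ∈ range (2 ^ k), t (2 ^ k + i)) / 2 ^ k) / 2 := by
      rw [pow_succ]; field_simp
    rw [e1]
    calc g (((∑ i ∈ range (2 ^ k), t i) / 2 ^ k + (∑ i ∈ range (2 ^ k), t (2 ^ k + i)) / 2 ^ k) / 2)
        ≤ (g ((∑ i ∈ range (2 ^ k), t i) / 2 ^ k) + g ((∑ i ∈ range (2 ^ k), t (2 ^ k + i)) / 2 ^ k)) / 2 :=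
          hm _ _
      _ ≤ ((∑ i ∈ range (2 ^ k), g (t i)) / 2 ^ k + (∑ i ∈ range (2 ^ k), g (t (2 ^ k + i))) / 2 ^ k) / 2 := by
          gcongr
          · exact ih t
          · exact ih (fun i => t (2 ^ k + i))
      _ = (∑ i ∈ range (2 ^ k), g (t i) + ∑ i ∈ range (2 ^ k), g (t (2 ^ k + i))) / 2 ^ (k+1) := by
          rw [pow_succ]; field_simp

-- midpoint Jensen for arbitrary n, Cauchy trick
lemma midpoint_jensen (g : ℝ → ℝ) (hm : ∀ s t : ℝ, g ((s + t) / 2) ≤ (g s + g t) / 2)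
    (n : ℕ) (hn : 0 < n) (t : ℕ → ℝ) :
    g ((∑ i ∈ range n, t i) / n) ≤ (∑ i ∈ range n, g (t i)) / n := by
  obtain ⟨k, hk⟩ : ∃ k : ℕ, n ≤ 2 ^ k := ⟨n, (Nat.lt_two_pow_self).le⟩
  set M : ℝ := (∑ i ∈ range n, t i) / n with hM
  set t' : ℕ → ℝ := fun i => if i < n then t i else M with ht'
  have hnR : (0:ℝ) < n := by exact_mod_cast hn
  have hsum1 : ∑ i ∈ range n, t' i = ∑ i ∈ range n, t i :=
    Finset.sum_congr rfl fun i hi => by simp [ht', Finset.mem_range.mp hi]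
  have hsum2 : ∑ i ∈ range n, g (t' i) = ∑ i ∈ range n, g (t i) :=
    Finset.sum_congr rfl fun i hi => by simp [ht', Finset.mem_range.mp hi]
  have hdec : 2 ^ k = n + (2 ^ k - n) := by omega
  have hsum : ∑ i ∈ range (2 ^ k), t' i = n * M + (2 ^ k - n : ℕ) * M := by
    rw [hdec, Finset.sum_range_add, hsum1]
    congr 1
    · rw [hM]; field_simp
    · rw [Finset.sum_congr rfl (fun i _ => show t' (n + i) = M by simp [ht'])]
      simp [mul_comm]
  have hsumg : ∑ i ∈ range (2 ^ k), g (t' i)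
      = ∑ i ∈ range n, g (t i) + (2 ^ k - n : ℕ) * g M := by
    rw [hdec, Finset.sum_range_add, hsum2]
    congr 1
    rw [Finset.sum_congr rfl (fun i _ => show g (t' (n + i)) = g M by simp [ht'])]
    simp [mul_comm]
  have key := pow2_jensen g hm k t'
  rw [hsum, hsumg] at key
  have h2k : (0:ℝ) < 2 ^ k := by positivity
  have hcast : ((2 ^ k - n : ℕ) : ℝ) = 2 ^ k - n := by
    push_cast [Nat.cast_sub hk]; ring
  rw [hcast] at key
  have harg : (n * M + ((2:ℝ) ^ k - n) * M) / 2 ^ k = M := by field_simp; ring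
  rw [harg] at key
  have key2 := (le_div_iff₀ h2k).mp key
  rw [le_div_iff₀ hnR]
  nlinarith [key2]

-- the two midpoint facts for g = ± log ∘ f ∘ exp
lemma sqrt_exp_half (s t : ℝ) : Real.sqrt (Real.exp s * Real.exp t) = Real.exp ((s + t) / 2) := by
  have h : Real.exp s * Real.exp t = Real.exp ((s+t)/2) * Real.exp ((s+t)/2) := by
    rw [← Real.exp_add, ← Real.exp_add]; ring_nf
  rw [h, Real.sqrt_mul_self (Real.exp_pos _).le]

lemma log_jensen_core (f : ℝ → ℝ) (hpos : ∀ x : ℝ, 0 < x → 0 < f x)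
    (n : ℕ) (hn : 0 < n) (x : ℕ → ℝ) (hx : ∀ i, 0 < x i)
    (g : ℝ → ℝ) (hg : g = fun s => Real.log (f (Real.exp s)))
    (hm : ∀ s t : ℝ, g ((s + t) / 2) ≤ (g s + g t) / 2) :
    f ((∏ i ∈ range n, x i) ^ ((n:ℝ)⁻¹)) ≤ (∏ i ∈ range n, f (x i)) ^ ((n:ℝ)⁻¹) := by
  have hP : (0:ℝ) < ∏ i ∈ range n, x i := Finset.prod_pos fun i _ => hx i
  have hQ : (0:ℝ) < ∏ i ∈ range n, f (x i) := Finset.prod_pos fun i _ => hpos _ (hx i)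
  have key := midpoint_jensen g hm n hn (fun i => Real.log (x i))
  have hsum : (∑ i ∈ range n, Real.log (x i)) = Real.log (∏ i ∈ range n, x i) :=
    (Real.log_prod fun i _ => (hx i).ne').symm
  have hsum2 : (∑ i ∈ range n, g (Real.log (x i))) = Real.log (∏ i ∈ range n, f (x i)) := by
    rw [Real.log_prod fun i _ => (hpos _ (hx i)).ne']
    exact Finset.sum_congr rfl fun i _ => by rw [hg]; simp [Real.exp_log (hx i)]
  rw [hsum, hsum2] at key
  have hexp : Real.exp (Real.log (∏ i ∈ range n, x i) / n)
      = (∏ i ∈ range n, x i) ^ ((n:ℝ)⁻¹) := by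
    rw [Real.rpow_def_of_pos hP]; ring_nf
  have hlhs : g (Real.log (∏ i ∈ range n, x i) / n)
      = Real.log (f ((∏ i ∈ range n, x i) ^ ((n:ℝ)⁻¹))) := by
    rw [hg]; simp only []; rw [hexp]
  rw [hlhs] at key
  have hrhs : Real.log (∏ i ∈ range n, f (x i)) / n
      = Real.log ((∏ i ∈ range n, f (x i)) ^ ((n:ℝ)⁻¹)) := by
    rw [Real.log_rpow hQ]; ring
  rw [hrhs] at key
  have h1 : 0 < f ((∏ i ∈ range n, x i) ^ ((n:ℝ)⁻¹)) := hpos _ (Real.rpow_pos_of_pos hP _)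
  have h2 : 0 < (∏ i ∈ range n, f (x i)) ^ ((n:ℝ)⁻¹) := Real.rpow_pos_of_pos hQ _
  exact (Real.log_le_log_iff h1 h2).mp key

lemma geomMean_le (f : ℝ → ℝ) (hpos : ∀ x : ℝ, 0 < x → 0 < f x)
    (hm : ∀ x y : ℝ, 0 < x → 0 < y → f (Real.sqrt (x * y)) ≤ Real.sqrt (f x * f y))
    (n : ℕ) (hn : 0 < n) (x : ℕ → ℝ) (hx : ∀ i, 0 < x i) :
    f ((∏ i ∈ range n, x i) ^ ((n:ℝ)⁻¹)) ≤ (∏ i ∈ range n, f (x i)) ^ ((n:ℝ)⁻¹) := by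
  refine log_jensen_core f hpos n hn x hx _ rfl ?_
  intro s t
  have h1 : 0 < f (Real.exp s) := hpos _ (Real.exp_pos s)
  have h2 : 0 < f (Real.exp t) := hpos _ (Real.exp_pos t)
  have := hm (Real.exp s) (Real.exp t) (Real.exp_pos s) (Real.exp_pos t)
  rw [sqrt_exp_half] at this
  have hlog := Real.log_le_log (hpos _ (Real.exp_pos _)) this
  calc Real.log (f (Real.exp ((s+t)/2))) ≤ Real.log (Real.sqrt (f (Real.exp s) * f (Real.exp t))) := hlog
    _ = (Real.log (f (Real.exp s)) + Real.log (f (Real.exp t))) / 2 := by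
        rw [Real.log_sqrt (by positivity), Real.log_mul h1.ne' h2.ne']

lemma geomMean_ge (f : ℝ → ℝ) (hpos : ∀ x : ℝ, 0 < x → 0 < f x)
    (hm : ∀ x y : ℝ, 0 < x → 0 < y → Real.sqrt (f x * f y) ≤ f (Real.sqrt (x * y)))
    (n : ℕ) (hn : 0 < n) (x : ℕ → ℝ) (hx : ∀ i, 0 < x i) :
    (∏ i ∈ range n, f (x i)) ^ ((n:ℝ)⁻¹) ≤ f ((∏ i ∈ range n, x i) ^ ((n:ℝ)⁻¹)) := by
  have hP : (0:ℝ) < ∏ i ∈ range n, x i := Finset.prod_pos fun i _ => hx i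
  have hQ : (0:ℝ) < ∏ i ∈ range n, f (x i) := Finset.prod_pos fun i _ => hpos _ (hx i)
  -- apply midpoint jensen to g = - log f exp
  set g : ℝ → ℝ := fun s => - Real.log (f (Real.exp s)) with hg
  have hmg : ∀ s t : ℝ, g ((s + t) / 2) ≤ (g s + g t) / 2 := by
    intro s t
    have h1 : 0 < f (Real.exp s) := hpos _ (Real.exp_pos s)
    have h2 : 0 < f (Real.exp t) := hpos _ (Real.exp_pos t)
    have := hm (Real.exp s) (Real.exp t) (Real.exp_pos s) (Real.exp_pos t)
    rw [sqrt_exp_half] at this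
    have hlog := Real.log_le_log (Real.sqrt_pos.mpr (by positivity)) this
    rw [Real.log_sqrt (by positivity), Real.log_mul h1.ne' h2.ne'] at hlog
    simp only [hg]
    linarith
  have key := midpoint_jensen g hmg n hn (fun i => Real.log (x i))
  have hsum : (∑ i ∈ range n, Real.log (x i)) = Real.log (∏ i ∈ range n, x i) :=
    (Real.log_prod fun i _ => (hx i).ne').symm
  have hsum2 : (∑ i ∈ range n, g (Real.log (x i))) = - Real.log (∏ i ∈ range n, f (x i)) := by
    rw [Real.log_prod fun i _ => (hpos _ (hx i)).ne', ← Finset.sum_neg_distrib]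
    exact Finset.sum_congr rfl fun i _ => by simp [hg, Real.exp_log (hx i)]
  rw [hsum, hsum2] at key
  have hexp : Real.exp (Real.log (∏ i ∈ range n, x i) / n)
      = (∏ i ∈ range n, x i) ^ ((n:ℝ)⁻¹) := by
    rw [Real.rpow_def_of_pos hP]; ring_nf
  have hlhs : g (Real.log (∏ i ∈ range n, x i) / n)
      = - Real.log (f ((∏ i ∈ range n, x i) ^ ((n:ℝ)⁻¹))) := by
    simp only [hg]; rw [hexp]
  rw [hlhs] at key
  have hnR : (0:ℝ) < n := by exact_mod_cast hn
  have key2 : Real.log (∏ i ∈ range n, f (x i)) / n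
      ≤ Real.log (f ((∏ i ∈ range n, x i) ^ ((n:ℝ)⁻¹))) := by
    have : - Real.log (f ((∏ i ∈ range n, x i) ^ ((n:ℝ)⁻¹))) ≤ - (Real.log (∏ i ∈ range n, f (x i)) / n) := by
      calc _ ≤ - Real.log (∏ i ∈ range n, f (x i)) / n := key
        _ = - (Real.log (∏ i ∈ range n, f (x i)) / n) := by ring
    linarith
  have hrhs : Real.log (∏ i ∈ range n, f (x i)) / n
      = Real.log ((∏ i ∈ range n, f (x i)) ^ ((n:ℝ)⁻¹)) := by
    rw [Real.log_rpow hQ]; ring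
  rw [hrhs] at key2
  have h1 : 0 < f ((∏ i ∈ range n, x i) ^ ((n:ℝ)⁻¹)) := hpos _ (Real.rpow_pos_of_pos hP _)
  have h2 : 0 < (∏ i ∈ range n, f (x i)) ^ ((n:ℝ)⁻¹) := Real.rpow_pos_of_pos hQ _
  exact (Real.log_le_log_iff h2 h1).mp key2

lemma det_hermitian_cfc {n : Type*} [Fintype n] [DecidableEq n]
    {X : Matrix n n ℂ} (hX : X.IsHermitian) (g : ℝ → ℝ) :
    (hX.cfc g).det = ∏ i, (g (hX.eigenvalues i) : ℂ) := by
  rw [Matrix.IsHermitian.cfc, Unitary.conjStarAlgAut_apply, det_mul, det_mul]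
  have hU : (hX.eigenvectorUnitary : Matrix n n ℂ) * star (hX.eigenvectorUnitary : Matrix n n ℂ) = 1 :=
    (Matrix.mem_unitaryGroup_iff.mp hX.eigenvectorUnitary.2)
  have : (hX.eigenvectorUnitary : Matrix n n ℂ).det * (star (hX.eigenvectorUnitary : Matrix n n ℂ)).det = 1 := by
    rw [← det_mul, hU, det_one]
  calc (hX.eigenvectorUnitary : Matrix n n ℂ).det * (diagonal (RCLike.ofReal ∘ g ∘ hX.eigenvalues)).det
        * (star (hX.eigenvectorUnitary : Matrix n n ℂ)).det
      = (diagonal (RCLike.ofReal ∘ g ∘ hX.eigenvalues)).det *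
        ((hX.eigenvectorUnitary : Matrix n n ℂ).det * (star (hX.eigenvectorUnitary : Matrix n n ℂ)).det) := by ring
    _ = (diagonal (RCLike.ofReal ∘ g ∘ hX.eigenvalues)).det := by rw [this, mul_one]
    _ = ∏ i, (g (hX.eigenvalues i) : ℂ) := by rw [det_diagonal]; rfl

lemma posDef_conj_herm {n : Type*} [Fintype n] [DecidableEq n]
    {M B : Matrix n n ℂ} (hM : M.IsHermitian) (hMu : IsUnit M) (hB : B.PosDef) :
    (M * B * M).PosDef := by
  rw [posDef_iff_dotProduct_mulVec]
  constructor
  · show (M * B * M)ᴴ = M * B * M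
    rw [conjTranspose_mul, conjTranspose_mul, hM.eq, hB.1.eq, mul_assoc]
  · intro x hx
    have hMx : M *ᵥ x ≠ 0 :=
      ((Matrix.mulVec_injective_iff_isUnit.mpr hMu).ne_iff' (Matrix.mulVec_zero M)).mpr hx
    have h := hB.dotProduct_mulVec_pos hMx
    have e : star x ⬝ᵥ (M * B * M) *ᵥ x = star (M *ᵥ x) ⬝ᵥ B *ᵥ (M *ᵥ x) := by
      rw [star_mulVec, hM.eq]
      rw [show (M * B * M) *ᵥ x = M *ᵥ (B *ᵥ (M *ᵥ x)) by rw [mulVec_mulVec, mulVec_mulVec]]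
      rw [dotProduct_mulVec]
    rw [e]; exact h

end AuxLemmas

open Matrix Finset

/-- Let `σ` be a Kubo–Ando operator mean with representing operator monotone function `f`.
If `f` is geometrically convex, then `det^{1/N}(A σ B) ≥ (det^{1/N} A) σ (det^{1/N} B)`
for positive matrices `A, B`, where on scalars `a σ b = a f(b/a)`; the reverse inequality
holds if `f` is geometrically concave. -/
theorem det_root_operator_mean
    (N : ℕ) (hN : 0 < N) (f : ℝ → ℝ)
    (hcont : ContinuousOn f (Set.Ioi (0 : ℝ)))
    (hpos : ∀ x : ℝ, 0 < x → 0 < f x)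
    (hopmono : ∀ (n : ℕ) (X Y : Matrix (Fin n) (Fin n) ℂ), X.PosDef → Y.PosDef →
      (Y - X).PosSemidef → (cfc f Y - cfc f X).PosSemidef)
    (hf1 : f 1 = 1)
    (σ : Matrix (Fin N) (Fin N) ℂ → Matrix (Fin N) (Fin N) ℂ → Matrix (Fin N) (Fin N) ℂ)
    (hσ : ∀ X Y : Matrix (Fin N) (Fin N) ℂ, X.PosDef → Y.PosDef →
      σ X Y = rsqrt X * cfc f (risqrt X * Y * risqrt X) * rsqrt X)
    (A B : Matrix (Fin N) (Fin N) ℂ) (hA : A.PosDef) (hB : B.PosDef) :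
    ((∀ x y : ℝ, 0 < x → 0 < y → f (Real.sqrt (x * y)) ≤ Real.sqrt (f x * f y)) →
      A.det.re ^ ((N : ℝ)⁻¹) *
          f (B.det.re ^ ((N : ℝ)⁻¹) / A.det.re ^ ((N : ℝ)⁻¹)) ≤
        (σ A B).det.re ^ ((N : ℝ)⁻¹)) ∧
    ((∀ x y : ℝ, 0 < x → 0 < y → Real.sqrt (f x * f y) ≤ f (Real.sqrt (x * y))) →
      (σ A B).det.re ^ ((N : ℝ)⁻¹) ≤
        A.det.re ^ ((N : ℝ)⁻¹) *
          f (B.det.re ^ ((N : ℝ)⁻¹) / A.det.re ^ ((N : ℝ)⁻¹))) := by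
  have hAh : A.IsHermitian := hA.1
  -- eigenvalues of A
  set lam : Fin N → ℝ := hAh.eigenvalues with hlam
  have hlampos : ∀ i, 0 < lam i := fun i => hA.eigenvalues_pos i
  set a : ℝ := ∏ i, lam i with ha_def
  have ha : 0 < a := Finset.prod_pos fun i _ => hlampos i
  -- rsqrt and risqrt via hermitian cfc
  have hMeq : risqrt A = hAh.cfc (fun x : ℝ => (Real.sqrt x)⁻¹) := hAh.cfc_eq _
  have hSeq : rsqrt A = hAh.cfc Real.sqrt := hAh.cfc_eq _
  have hMsa : IsSelfAdjoint (risqrt A) := cfc_predicate _ A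
  have hMherm : (risqrt A).IsHermitian := hMsa
  -- determinants of rsqrt/risqrt
  set r : ℝ := ∏ i, (Real.sqrt (lam i))⁻¹ with hr_def
  set s : ℝ := ∏ i, Real.sqrt (lam i) with hs_def
  have hrpos : 0 < r := Finset.prod_pos fun i _ => inv_pos.mpr (Real.sqrt_pos.mpr (hlampos i))
  have hspos : 0 < s := Finset.prod_pos fun i _ => Real.sqrt_pos.mpr (hlampos i)
  have hdetM : (risqrt A).det = (r : ℂ) := by
    rw [hMeq, det_hermitian_cfc, hr_def]; push_cast; rfl
  have hdetS : (rsqrt A).det = (s : ℂ) := by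
    rw [hSeq, det_hermitian_cfc, hs_def]; push_cast; rfl
  have hs2 : s ^ 2 = a := by
    rw [hs_def, ha_def, ← Finset.prod_pow]
    exact Finset.prod_congr rfl fun i _ => Real.sq_sqrt (hlampos i).le
  have hr2 : r ^ 2 * a = 1 := by
    rw [hr_def, ha_def, ← Finset.prod_pow, ← Finset.prod_mul_distrib]
    apply Finset.prod_eq_one
    intro i _
    have h := Real.sq_sqrt (hlampos i).le
    have hne : Real.sqrt (lam i) ≠ 0 := (Real.sqrt_pos.mpr (hlampos i)).ne'
    rw [inv_pow]
    exact (inv_mul_eq_one₀ (pow_ne_zero 2 hne)).mpr h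
  -- C is positive definite
  have hMu : IsUnit (risqrt A) := by
    rw [Matrix.isUnit_iff_isUnit_det, hdetM, isUnit_iff_ne_zero]
    exact_mod_cast hrpos.ne'
  set C : Matrix (Fin N) (Fin N) ℂ := risqrt A * B * risqrt A with hC_def
  have hC : C.PosDef := posDef_conj_herm hMherm hMu hB
  have hCh : C.IsHermitian := hC.1
  set mu : Fin N → ℝ := hCh.eigenvalues with hmu
  have hmupos : ∀ i, 0 < mu i := fun i => hC.eigenvalues_pos i
  set p : ℝ := ∏ i, mu i with hp_def
  set q : ℝ := ∏ i, f (mu i) with hq_def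
  have hp : 0 < p := Finset.prod_pos fun i _ => hmupos i
  have hq : 0 < q := Finset.prod_pos fun i _ => hpos _ (hmupos i)
  -- determinant identities
  have hdetA : A.det = (a : ℂ) := by
    rw [hAh.det_eq_prod_eigenvalues, ha_def]; push_cast; rfl
  have hdetC : C.det = (p : ℂ) := by
    rw [hCh.det_eq_prod_eigenvalues, hp_def]; push_cast; rfl
  have hdetC2 : C.det = (r : ℂ) * B.det * (r : ℂ) := by
    rw [hC_def, det_mul, det_mul, hdetM]
  have hdetB : B.det = ((a * p : ℝ) : ℂ) := by
    have h1 : B.det * ((r:ℂ)^2) = (p:ℂ) := by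
      rw [← hdetC, hdetC2]; ring
    have hraC : ((r:ℂ))^2 * (a:ℂ) = 1 := by
      have := congrArg (Complex.ofReal) hr2
      push_cast at this ⊢; exact this
    calc B.det = B.det * ((r:ℂ)^2 * (a:ℂ)) := by rw [hraC, mul_one]
      _ = (B.det * (r:ℂ)^2) * (a:ℂ) := by ring
      _ = (p:ℂ) * (a:ℂ) := by rw [h1]
      _ = ((a * p : ℝ) : ℂ) := by push_cast; ring
  have hcfcC : cfc f C = hCh.cfc f := hCh.cfc_eq f
  have hdetcfc : (cfc f C).det = (q : ℂ) := by
    rw [hcfcC, det_hermitian_cfc, hq_def]; push_cast; rfl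
  have hdetσ : (σ A B).det = ((a * q : ℝ) : ℂ) := by
    rw [hσ A B hA hB, det_mul, det_mul, hdetS, ← hC_def, hdetcfc]
    have : ((s:ℂ))^2 = (a:ℂ) := by
      have := congrArg (Complex.ofReal) hs2
      push_cast at this ⊢; exact this
    push_cast
    calc (s:ℂ) * (q:ℂ) * (s:ℂ) = (s:ℂ)^2 * (q:ℂ) := by ring
      _ = (a:ℂ) * (q:ℂ) := by rw [this]
  -- real parts
  have hAre : A.det.re = a := by rw [hdetA, Complex.ofReal_re]
  have hBre : B.det.re = a * p := by rw [hdetB, Complex.ofReal_re]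
  have hσre : (σ A B).det.re = a * q := by rw [hdetσ, Complex.ofReal_re]
  rw [hAre, hBre, hσre]
  -- simplify rpow expressions
  have hNR : (0:ℝ) < (N:ℝ) := by exact_mod_cast hN
  have e1 : (a * p) ^ ((N:ℝ)⁻¹) = a ^ ((N:ℝ)⁻¹) * p ^ ((N:ℝ)⁻¹) := Real.mul_rpow ha.le hp.le
  have e2 : (a * q) ^ ((N:ℝ)⁻¹) = a ^ ((N:ℝ)⁻¹) * q ^ ((N:ℝ)⁻¹) := Real.mul_rpow ha.le hq.le
  have hapow : 0 < a ^ ((N:ℝ)⁻¹) := Real.rpow_pos_of_pos ha _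
  have e3 : (a * p) ^ ((N:ℝ)⁻¹) / a ^ ((N:ℝ)⁻¹) = p ^ ((N:ℝ)⁻¹) := by
    rw [e1]; exact mul_div_cancel_left₀ _ hapow.ne'
  rw [e3, e2]
  -- transfer products to range form
  set x : ℕ → ℝ := fun i => if h : i < N then mu ⟨i, h⟩ else 1 with hx_def
  have hxpos : ∀ i, 0 < x i := by
    intro i; rw [hx_def]; dsimp only
    split
    · exact hmupos _
    · exact one_pos
  have hprodx : ∏ i ∈ range N, x i = p := by
    rw [hp_def, ← Fin.prod_univ_eq_prod_range]
    exact Finset.prod_congr rfl fun i _ => by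
      rw [hx_def]; simp [i.isLt]
  have hprodfx : ∏ i ∈ range N, f (x i) = q := by
    rw [hq_def, ← Fin.prod_univ_eq_prod_range]
    exact Finset.prod_congr rfl fun i _ => by
      rw [hx_def]; simp [i.isLt]
  constructor
  · intro hgcv
    have core := geomMean_le f hpos hgcv N hN x hxpos
    rw [hprodx, hprodfx] at core
    exact mul_le_mul_of_nonneg_left core hapow.le
  · intro hgcc
    have core := geomMean_ge f hpos hgcc N hN x hxpos
    rw [hprodx, hprodfx] at core
    exact mul_le_mul_of_nonneg_left core hapow.le
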